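/- Under Assumption 1, let h satisfy z_o < h < H and let δ satisfy 0 < δ < R/2 and δ < h. If c : [0,∞) → ℝ² is a characteristic curve with c(t) ∈ [δ, R−δ] × [δ, h] for all t ≥ 0 (i.e., the curve is trapped below the minimum observable height for all forward time), then Γ(c(0)) ≥ g(r_o)·ψ(h). (This is the other direction of the paper's characterization of the information void K_h: only points whose circulation is at least the circulation value at (r_o, h) can fail to reach the line z = h.) -/

import Mathlib

open Set

/-- Circulation `Γ(r,z) = r·φ(r)·ψ(z)`. -/
noncomputable def circ (φ ψ : ℝ → ℝ) (p : ℝ × ℝ) : ℝ := p.1 * φ p.1 * ψ p.2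

/-- Vertical vorticity `ζ(r,z) = g'(r)·ψ(z)/r` where `g(r) = r·φ(r)`. -/
noncomputable def zeta (φ ψ : ℝ → ℝ) (r z : ℝ) : ℝ :=
  deriv (fun s => s * φ s) r * ψ z / r

/-- Radial vorticity `η(r,z) = −φ(r)·ψ'(z)`. -/
noncomputable def eta (φ ψ : ℝ → ℝ) (r z : ℝ) : ℝ := -(φ r * deriv ψ z)

/-- A characteristic curve on an interval `I`: a differentiable curve
`c(t) = (r(t), z(t))` with `r(t) > 0` satisfying `r' = η(r,z)`, `z' = ζ(r,z)` on `I`. -/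
def IsCharCurve (φ ψ : ℝ → ℝ) (I : Set ℝ) (c : ℝ → ℝ × ℝ) : Prop :=
  (∀ t ∈ I, 0 < (c t).1) ∧
  ∀ t ∈ I,
    HasDerivWithinAt c
      (eta φ ψ (c t).1 (c t).2, zeta φ ψ (c t).1 (c t).2) I t

/-- If a continuously differentiable function has nonvanishing derivative on `(a,m)`
and is maximized (among `(a,m)`) at the right endpoint `m`, its derivative is
positive throughout `(a,m)`. -/
lemma aux_deriv_pos_of_max_right (f : ℝ → ℝ) (hfd : Differentiable ℝ f)
    (hfc : Continuous (deriv f)) (a m : ℝ)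
    (hne : ∀ x ∈ Ioo a m, deriv f x ≠ 0)
    (hmax : ∀ x ∈ Ioo a m, f x ≤ f m) :
    ∀ x ∈ Ioo a m, 0 < deriv f x := by
  intro x0 hx0
  by_contra hle
  have hneg : deriv f x0 < 0 := lt_of_le_of_ne (not_lt.mp hle) (hne x0 hx0)
  have hderivneg : ∀ x ∈ Ioo x0 m, deriv f x < 0 := by
    intro x hx
    have hxam : x ∈ Ioo a m := ⟨hx0.1.trans hx.1, hx.2⟩
    rcases lt_trichotomy (deriv f x) 0 with hc | hc | hc
    · exact hc
    · exact absurd hc (hne x hxam)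
    · exfalso
      have h0 : (0:ℝ) ∈ Ioo (deriv f x0) (deriv f x) := ⟨hneg, hc⟩
      obtain ⟨y, hy, hy0⟩ := intermediate_value_Ioo hx.1.le hfc.continuousOn h0
      exact hne y ⟨hx0.1.trans hy.1, hy.2.trans hx.2⟩ hy0
  have hanti : StrictAntiOn f (Icc x0 m) := by
    apply strictAntiOn_of_deriv_neg (convex_Icc _ _) hfd.continuous.continuousOn
    intro x hx
    rw [interior_Icc] at hx
    exact hderivneg x hx
  have h1 : f m < f x0 := hanti ⟨le_rfl, hx0.2.le⟩ ⟨hx0.2.le, le_rfl⟩ hx0.2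
  exact absurd (hmax x0 hx0) (not_le.mpr h1)

/-- If a continuously differentiable function has nonvanishing derivative on `(m,b)`
and is maximized (among `(m,b)`) at the left endpoint `m`, its derivative is
negative throughout `(m,b)`. -/
lemma aux_deriv_neg_of_max_left (f : ℝ → ℝ) (hfd : Differentiable ℝ f)
    (hfc : Continuous (deriv f)) (m b : ℝ)
    (hne : ∀ x ∈ Ioo m b, deriv f x ≠ 0)
    (hmax : ∀ x ∈ Ioo m b, f x ≤ f m) :
    ∀ x ∈ Ioo m b, deriv f x < 0 := by
  intro x0 hx0
  by_contra hle
  have hpos : 0 < deriv f x0 := lt_of_le_of_ne (not_lt.mp hle) (Ne.symm (hne x0 hx0))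
  have hderivpos : ∀ x ∈ Ioo m x0, 0 < deriv f x := by
    intro x hx
    have hxmb : x ∈ Ioo m b := ⟨hx.1, hx.2.trans hx0.2⟩
    rcases lt_trichotomy (deriv f x) 0 with hc | hc | hc
    · exfalso
      have h0 : (0:ℝ) ∈ Ioo (deriv f x) (deriv f x0) := ⟨hc, hpos⟩
      obtain ⟨y, hy, hy0⟩ := intermediate_value_Ioo hx.2.le hfc.continuousOn h0
      exact hne y ⟨hx.1.trans hy.1, hy.2.trans hx0.2⟩ hy0
    · exact absurd hc (hne x hxmb)
    · exact hc
  have hmono : StrictMonoOn f (Icc m x0) := by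
    apply strictMonoOn_of_deriv_pos (convex_Icc _ _) hfd.continuous.continuousOn
    intro x hx
    rw [interior_Icc] at hx
    exact hderivpos x hx
  have h1 : f m < f x0 := hmono ⟨le_rfl, hx0.1.le⟩ ⟨hx0.1.le, le_rfl⟩ hx0.1
  exact absurd (hmax x0 hx0) (not_le.mpr h1)

/-- Imaginary part of the logarithmic-derivative ratio, in coordinates. -/
lemma aux_im_ratio (a b p q : ℝ) :
    ((Complex.I * ((a:ℂ) + (b:ℂ) * Complex.I)) *
      (Complex.I * ((p:ℂ) + (q:ℂ) * Complex.I))⁻¹).im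
      = (p * b - q * a) / (p ^ 2 + q ^ 2) := by
  have hrw : (Complex.I * ((a:ℂ) + (b:ℂ) * Complex.I)) *
      (Complex.I * ((p:ℂ) + (q:ℂ) * Complex.I))⁻¹
      = ((a:ℂ) + (b:ℂ) * Complex.I) / ((p:ℂ) + (q:ℂ) * Complex.I) := by
    rw [div_eq_mul_inv, mul_inv]
    calc Complex.I * ((a:ℂ) + (b:ℂ) * Complex.I) *
        (Complex.I⁻¹ * ((p:ℂ) + (q:ℂ) * Complex.I)⁻¹)
        = (Complex.I * Complex.I⁻¹) * (((a:ℂ) + (b:ℂ) * Complex.I) *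
          ((p:ℂ) + (q:ℂ) * Complex.I)⁻¹) := by ring
      _ = ((a:ℂ) + (b:ℂ) * Complex.I) * ((p:ℂ) + (q:ℂ) * Complex.I)⁻¹ := by
          rw [mul_inv_cancel₀ Complex.I_ne_zero, one_mul]
  rw [hrw, Complex.div_im]
  simp only [Complex.add_re, Complex.add_im, Complex.ofReal_re, Complex.ofReal_im,
    Complex.mul_I_re, Complex.mul_I_im, Complex.normSq_add_mul_I]
  rw [div_sub_div_same]
  congr 1
  ring

/-- Real and imaginary parts of `I·(x + yI)`. -/
lemma aux_re_im (x y : ℝ) :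
    (Complex.I * ((x:ℂ) + (y:ℂ) * Complex.I)).re = -y ∧
    (Complex.I * ((x:ℂ) + (y:ℂ) * Complex.I)).im = x := by
  constructor <;> simp

/-- A curve staying in the slit plane for all forward time cannot have its
logarithmic angular speed bounded above by a negative constant. -/
lemma aux_no_trapped_rotation (k : ℝ) (hk : 0 < k) (w : ℝ → ℂ)
    (hw : ∀ t ∈ Ici (0:ℝ), w t ∈ Complex.slitPlane)
    (hd : ∀ t ∈ Ici (0:ℝ), ∃ d : ℂ,
      HasDerivWithinAt w d (Ici 0) t ∧ (d * (w t)⁻¹).im ≤ -k) : False := by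
  set F : ℝ → ℝ := fun t => (Complex.log (w t)).im with hF
  have hFderiv : ∀ t ∈ Ici (0:ℝ), ∃ d' : ℝ, HasDerivWithinAt F d' (Ici 0) t ∧ d' ≤ -k := by
    intro t ht
    obtain ⟨d, hdw, hdle⟩ := hd t ht
    have hlog : HasDerivAt Complex.log (w t)⁻¹ (w t) := Complex.hasDerivAt_log (hw t ht)
    have hcomp : HasDerivWithinAt (fun s => Complex.log (w s)) (d • (w t)⁻¹) (Ici 0) t :=
      hlog.scomp_hasDerivWithinAt t hdw
    exact ⟨(d • (w t)⁻¹).im,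
      Complex.imCLM.hasFDerivAt.comp_hasDerivWithinAt t hcomp, by simpa using hdle⟩
  have hGderiv : ∀ t ∈ Ici (0:ℝ), ∃ d' : ℝ,
      HasDerivWithinAt (fun s => F s + k * s) d' (Ici 0) t ∧ d' ≤ 0 := by
    intro t ht
    obtain ⟨d', hd', hle⟩ := hFderiv t ht
    have hid : HasDerivWithinAt (fun s : ℝ => k * s) k (Ici 0) t := by
      simpa using (hasDerivWithinAt_id t (Ici 0)).const_mul k
    exact ⟨d' + k, hd'.add hid, by linarith⟩
  have hGcont : ContinuousOn (fun s => F s + k * s) (Ici 0) := by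
    intro t ht
    obtain ⟨d', hd', _⟩ := hGderiv t ht
    exact hd'.continuousWithinAt
  have hGanti : AntitoneOn (fun s => F s + k * s) (Ici 0) := by
    apply antitoneOn_of_deriv_nonpos (convex_Ici 0) hGcont
    · intro t ht
      rw [interior_Ici] at ht
      obtain ⟨d', hd', _⟩ := hGderiv t (mem_Ici.mpr (le_of_lt (mem_Ioi.mp ht)))
      exact (hd'.hasDerivAt (Ici_mem_nhds ht)).differentiableAt.differentiableWithinAt
    · intro t ht
      rw [interior_Ici] at ht
      obtain ⟨d', hd', hle⟩ := hGderiv t (mem_Ici.mpr (le_of_lt (mem_Ioi.mp ht)))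
      rw [(hd'.hasDerivAt (Ici_mem_nhds ht)).deriv]
      exact hle
  set T : ℝ := (2 * Real.pi + 1) / k with hT
  have hT0 : 0 ≤ T := by positivity
  have hGT : F T + k * T ≤ F 0 + k * 0 := hGanti self_mem_Ici (mem_Ici.mpr hT0) hT0
  have hkT : k * T = 2 * Real.pi + 1 := by
    rw [hT]; field_simp
  have hF0 : F 0 ≤ Real.pi := Complex.log_im_le_pi _
  have hFT : -Real.pi < F T := Complex.neg_pi_lt_log_im _
  rw [hkT] at hGT
  have hpi := Real.pi_pos
  linarith

/-- Only points whose circulation is at least the circulation value `g(r_o)·ψ(h)` at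
`(r_o, h)` can fail to reach the minimum observable height line `z = h`: a characteristic
curve trapped in `[δ, R−δ] × [δ, h]` for all forward time starts at a point with
circulation `≥ g(r_o)·ψ(h)`. -/
theorem trapped_curve_has_high_circulation
    (R H : ℝ) (hR : 0 < R) (hH : 0 < H)
    (φ ψ : ℝ → ℝ)
    (hφC2 : ContDiff ℝ 2 φ) (hψC2 : ContDiff ℝ 2 ψ)
    (hφ0 : φ 0 = 0) (hψ0 : ψ 0 = 0)
    (hφpos : ∀ r ∈ Ioo (0:ℝ) R, 0 < φ r)
    (hψpos : ∀ z ∈ Ioo (0:ℝ) H, 0 < ψ z)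
    (r_o : ℝ) (hro : r_o ∈ Ioo (0:ℝ) R)
    (z_o : ℝ) (hzo : z_o ∈ Ioo (0:ℝ) H)
    (hg'ro : deriv (fun s => s * φ s) r_o = 0)
    (hg'ne : ∀ r ∈ Ioo (0:ℝ) R, r ≠ r_o → deriv (fun s => s * φ s) r ≠ 0)
    (hψ'zo : deriv ψ z_o = 0)
    (hψ'ne : ∀ z ∈ Ioo (0:ℝ) H, z ≠ z_o → deriv ψ z ≠ 0)
    (hgmax : ∀ r ∈ Ioo (0:ℝ) R, r * φ r ≤ r_o * φ r_o)
    (hψmax : ∀ z ∈ Ioo (0:ℝ) H, ψ z ≤ ψ z_o)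
    (h : ℝ) (hzoh : z_o < h) (hhH : h < H)
    (δ : ℝ) (hδ : 0 < δ) (hδR : δ < R / 2) (hδh : δ < h)
    (c : ℝ → ℝ × ℝ) (hc : IsCharCurve φ ψ (Ici 0) c)
    (htrap : ∀ t ∈ Ici (0:ℝ), c t ∈ Icc δ (R - δ) ×ˢ Icc δ h) :
    r_o * φ r_o * ψ h ≤ circ φ ψ (c 0) := by
  by_contra hcon
  push_neg at hcon
  obtain ⟨hcpos, hcderiv⟩ := hc
  -- regularity of g(r) = r φ(r) and ψ
  have hgC2 : ContDiff ℝ 2 (fun s => s * φ s) := contDiff_id.mul hφC2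
  have hgd : Differentiable ℝ (fun s => s * φ s) := hgC2.differentiable two_ne_zero
  have hg'c : Continuous (deriv (fun s => s * φ s)) := hgC2.continuous_deriv one_le_two
  have hψd : Differentiable ℝ ψ := hψC2.differentiable two_ne_zero
  have hψ'c : Continuous (deriv ψ) := hψC2.continuous_deriv one_le_two
  have hφc : Continuous φ := hφC2.continuous
  have hψc : Continuous ψ := hψC2.continuous
  -- sign facts for the derivatives
  have hψ'pos : ∀ z ∈ Ioo 0 z_o, 0 < deriv ψ z :=
    aux_deriv_pos_of_max_right ψ hψd hψ'c 0 z_o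
      (fun z hz => hψ'ne z ⟨hz.1, hz.2.trans hzo.2⟩ hz.2.ne)
      (fun z hz => hψmax z ⟨hz.1, hz.2.trans hzo.2⟩)
  have hψ'neg : ∀ z ∈ Ioo z_o H, deriv ψ z < 0 :=
    aux_deriv_neg_of_max_left ψ hψd hψ'c z_o H
      (fun z hz => hψ'ne z ⟨hzo.1.trans hz.1, hz.2⟩ (ne_of_gt hz.1))
      (fun z hz => hψmax z ⟨hzo.1.trans hz.1, hz.2⟩)
  have hg'pos : ∀ r ∈ Ioo 0 r_o, 0 < deriv (fun s => s * φ s) r :=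
    aux_deriv_pos_of_max_right _ hgd hg'c 0 r_o
      (fun r hr => hg'ne r ⟨hr.1, hr.2.trans hro.2⟩ hr.2.ne)
      (fun r hr => hgmax r ⟨hr.1, hr.2.trans hro.2⟩)
  have hg'neg : ∀ r ∈ Ioo r_o R, deriv (fun s => s * φ s) r < 0 :=
    aux_deriv_neg_of_max_left _ hgd hg'c r_o R
      (fun r hr => hg'ne r ⟨hro.1.trans hr.1, hr.2⟩ (ne_of_gt hr.1))
      (fun r hr => hgmax r ⟨hro.1.trans hr.1, hr.2⟩)
  have hantipsi : StrictAntiOn ψ (Icc z_o H) := by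
    apply strictAntiOn_of_deriv_neg (convex_Icc _ _) hψc.continuousOn
    intro z hz
    rw [interior_Icc] at hz
    exact hψ'neg z hz
  have hh0 : 0 < h := hδ.trans hδh
  have hgro_pos : 0 < r_o * φ r_o := mul_pos hro.1 (hφpos r_o hro)
  have hψh_pos : 0 < ψ h := hψpos h ⟨hh0, hhH⟩
  -- component derivatives
  have hx : ∀ t ∈ Ici (0:ℝ), HasDerivWithinAt (fun s => (c s).1)
      (eta φ ψ (c t).1 (c t).2) (Ici 0) t := by
    intro t ht
    exact ((ContinuousLinearMap.fst ℝ ℝ ℝ).hasFDerivAt).comp_hasDerivWithinAt t (hcderiv t ht)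
  have hy : ∀ t ∈ Ici (0:ℝ), HasDerivWithinAt (fun s => (c s).2)
      (zeta φ ψ (c t).1 (c t).2) (Ici 0) t := by
    intro t ht
    exact ((ContinuousLinearMap.snd ℝ ℝ ℝ).hasFDerivAt).comp_hasDerivWithinAt t (hcderiv t ht)
  -- conservation of circulation along the curve
  have hGamma : ∀ t ∈ Ici (0:ℝ), HasDerivWithinAt (fun s => circ φ ψ (c s)) 0 (Ici 0) t := by
    intro t ht
    have hr0 : (0:ℝ) < (c t).1 := hcpos t ht
    have h1 : HasDerivWithinAt (fun s => (fun u => u * φ u) (c s).1)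
        (deriv (fun s => s * φ s) (c t).1 * eta φ ψ (c t).1 (c t).2) (Ici 0) t :=
      ((hgd _).hasDerivAt).comp_hasDerivWithinAt t (hx t ht)
    have h2 : HasDerivWithinAt (fun s => ψ (c s).2)
        (deriv ψ (c t).2 * zeta φ ψ (c t).1 (c t).2) (Ici 0) t :=
      ((hψd _).hasDerivAt).comp_hasDerivWithinAt t (hy t ht)
    have h3 := h1.mul h2
    have hval : deriv (fun s => s * φ s) (c t).1 * eta φ ψ (c t).1 (c t).2 * ψ (c t).2
        + (fun u => u * φ u) (c t).1 * (deriv ψ (c t).2 * zeta φ ψ (c t).1 (c t).2) = 0 := by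
      simp only [eta, zeta]
      field_simp
      ring
    rw [hval] at h3
    exact h3
  have hcons : ∀ t ∈ Ici (0:ℝ), circ φ ψ (c t) = circ φ ψ (c 0) := by
    intro t ht
    have hcont : ContinuousOn (fun s => circ φ ψ (c s)) (Icc 0 t) := by
      intro s hs
      exact ((hGamma s hs.1).continuousWithinAt).mono Icc_subset_Ici_self
    exact constant_of_has_deriv_right_zero hcont
      (fun s hs => (hGamma s hs.1).mono (Ici_subset_Ici.mpr hs.1)) t ⟨ht, le_rfl⟩
  -- the curve avoids the vertical ray r = r_o, z ≥ z_o
  have hexcl : ∀ t ∈ Ici (0:ℝ), (c t).1 = r_o → (c t).2 < z_o := by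
    intro t ht h1
    by_contra hge
    push_neg at hge
    have hmem := htrap t ht
    have hz2 : (c t).2 ≤ h := hmem.2.2
    have h2 : ψ h ≤ ψ (c t).2 :=
      hantipsi.antitoneOn ⟨hge, ((hmem.2.2).trans hhH.le)⟩ ⟨hzoh.le, hhH.le⟩ hz2
    have h3 : r_o * φ r_o * ψ h ≤ circ φ ψ (c t) := by
      simp only [circ, h1]
      exact mul_le_mul_of_nonneg_left h2 hgro_pos.le
    rw [hcons t ht] at h3
    exact absurd h3 (not_le.mpr hcon)
  -- the compact level set S
  have hcirc_cont : Continuous (circ φ ψ) :=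
    ((continuous_fst.mul (hφc.comp continuous_fst)).mul (hψc.comp continuous_snd))
  have hScomp : IsCompact ((Icc δ (R - δ) ×ˢ Icc δ h) ∩ {p | circ φ ψ p = circ φ ψ (c 0)}) :=
    (isCompact_Icc.prod isCompact_Icc).inter_right (isClosed_eq hcirc_cont continuous_const)
  have hSne : ((Icc δ (R - δ) ×ˢ Icc δ h) ∩ {p | circ φ ψ p = circ φ ψ (c 0)}).Nonempty :=
    ⟨c 0, htrap 0 self_mem_Ici, rfl⟩
  have hcS : ∀ t ∈ Ici (0:ℝ),
      c t ∈ (Icc δ (R - δ) ×ˢ Icc δ h) ∩ {p | circ φ ψ p = circ φ ψ (c 0)} :=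
    fun t ht => ⟨htrap t ht, hcons t ht⟩
  -- the angular speed numerator X is continuous and negative on S
  have hXcont : ContinuousOn (fun p : ℝ × ℝ =>
      (p.1 - r_o) * (deriv (fun s => s * φ s) p.1 * ψ p.2 / p.1)
      + (p.2 - z_o) * (φ p.1 * deriv ψ p.2))
      ((Icc δ (R - δ) ×ˢ Icc δ h) ∩ {p | circ φ ψ p = circ φ ψ (c 0)}) := by
    apply ContinuousOn.add
    · apply ContinuousOn.mul
      · exact (continuous_fst.sub continuous_const).continuousOn
      · apply ContinuousOn.div
        · exact ((hg'c.comp continuous_fst).mul (hψc.comp continuous_snd)).continuousOn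
        · exact continuous_fst.continuousOn
        · rintro ⟨r, z⟩ ⟨⟨⟨hr1, _⟩, _⟩, _⟩
          exact ne_of_gt (hδ.trans_le hr1)
    · exact ((continuous_snd.sub continuous_const).mul
        ((hφc.comp continuous_fst).mul (hψ'c.comp continuous_snd))).continuousOn
  have hXneg : ∀ p ∈ (Icc δ (R - δ) ×ˢ Icc δ h) ∩ {p | circ φ ψ p = circ φ ψ (c 0)},
      (p.1 - r_o) * (deriv (fun s => s * φ s) p.1 * ψ p.2 / p.1)
      + (p.2 - z_o) * (φ p.1 * deriv ψ p.2) < 0 := by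
    rintro ⟨r, z⟩ ⟨⟨⟨hr1, hr2⟩, hz1, hz2⟩, hlev⟩
    simp only at hr1 hr2 hz1 hz2
    have hr0 : 0 < r := hδ.trans_le hr1
    have hrR : r < R := lt_of_le_of_lt hr2 (by linarith)
    have hz0 : 0 < z := hδ.trans_le hz1
    have hzH : z < H := lt_of_le_of_lt hz2 hhH
    have hψz : 0 < ψ z := hψpos z ⟨hz0, hzH⟩
    have hφr : 0 < φ r := hφpos r ⟨hr0, hrR⟩
    simp only
    have hterm2 : (z - z_o) * (φ r * deriv ψ z) ≤ 0 := by
      rcases lt_trichotomy z z_o with hcc | hcc | hcc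
      · have hp := mul_pos hφr (hψ'pos z ⟨hz0, hcc⟩)
        nlinarith
      · simp [hcc, hψ'zo]
      · have hp := mul_neg_of_pos_of_neg hφr (hψ'neg z ⟨hcc, hzH⟩)
        nlinarith
    rcases eq_or_ne r r_o with hr | hr
    · have hzlt : z < z_o := by
        by_contra hge
        push_neg at hge
        have h2 : ψ h ≤ ψ z := hantipsi.antitoneOn ⟨hge, hzH.le⟩ ⟨hzoh.le, hhH.le⟩ hz2
        have h3 : r_o * φ r_o * ψ h ≤ circ φ ψ (r, z) := by
          simp only [circ, hr]
          exact mul_le_mul_of_nonneg_left h2 hgro_pos.le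
        have h4 : circ φ ψ (r, z) = circ φ ψ (c 0) := hlev
        rw [h4] at h3
        exact absurd h3 (not_le.mpr hcon)
      have ht1 : (r - r_o) * (deriv (fun s => s * φ s) r * ψ z / r) = 0 := by
        rw [hr]; ring
      have hp := mul_pos hφr (hψ'pos z ⟨hz0, hzlt⟩)
      nlinarith
    · have ht1 : (r - r_o) * (deriv (fun s => s * φ s) r * ψ z / r) < 0 := by
        rcases lt_or_gt_of_ne hr with hcc | hcc
        · have hg' := hg'pos r ⟨hr0, hcc⟩
          have hq : 0 < deriv (fun s => s * φ s) r * ψ z / r := by positivity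
          nlinarith
        · have hg' := hg'neg r ⟨hcc, hrR⟩
          have hq : deriv (fun s => s * φ s) r * ψ z / r < 0 :=
            div_neg_of_neg_of_pos (mul_neg_of_neg_of_pos hg' hψz) hr0
          nlinarith
      linarith
  obtain ⟨pM, hpMS, hpMmax⟩ := hScomp.exists_isMaxOn hSne hXcont
  set ε : ℝ := -((pM.1 - r_o) * (deriv (fun s => s * φ s) pM.1 * ψ pM.2 / pM.1)
      + (pM.2 - z_o) * (φ pM.1 * deriv ψ pM.2)) with hεdef
  have hε : 0 < ε := neg_pos.mpr (hXneg pM hpMS)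
  have hM : 0 < R ^ 2 + H ^ 2 := by positivity
  have hk : 0 < ε / (R ^ 2 + H ^ 2) := div_pos hε hM
  -- apply the rotation lemma to w(t) = I((r(t) - r_o) + (z(t) - z_o) I)
  apply aux_no_trapped_rotation (ε / (R ^ 2 + H ^ 2)) hk
    (fun t => Complex.I * ((((c t).1 - r_o : ℝ) : ℂ) + (((c t).2 - z_o : ℝ) : ℂ) * Complex.I))
  · -- slit plane membership
    intro t ht
    rw [Complex.mem_slitPlane_iff, (aux_re_im _ _).1, (aux_re_im _ _).2]
    rcases eq_or_ne (c t).1 r_o with hr | hr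
    · left
      have := hexcl t ht hr
      linarith
    · right
      exact sub_ne_zero.mpr hr
  · -- derivative and angular speed bound
    intro t ht
    have hmem := htrap t ht
    have hr0 : 0 < (c t).1 := hcpos t ht
    have hxxC : HasDerivWithinAt (fun s => (((c s).1 - r_o : ℝ) : ℂ))
        ((eta φ ψ (c t).1 (c t).2 : ℝ) : ℂ) (Ici 0) t :=
      Complex.ofRealCLM.hasFDerivAt.comp_hasDerivWithinAt t ((hx t ht).sub_const r_o)
    have hyyC : HasDerivWithinAt (fun s => (((c s).2 - z_o : ℝ) : ℂ))
        ((zeta φ ψ (c t).1 (c t).2 : ℝ) : ℂ) (Ici 0) t :=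
      Complex.ofRealCLM.hasFDerivAt.comp_hasDerivWithinAt t ((hy t ht).sub_const z_o)
    refine ⟨Complex.I * (((eta φ ψ (c t).1 (c t).2 : ℝ) : ℂ)
      + ((zeta φ ψ (c t).1 (c t).2 : ℝ) : ℂ) * Complex.I),
      (hxxC.add (hyyC.mul_const Complex.I)).const_mul Complex.I, ?_⟩
    rw [aux_im_ratio]
    -- now a purely real estimate
    have hxx1 : (c t).1 - r_o ≤ R := by
      have := hmem.1.2; have := hro.1; linarith [hmem.1.2, hro.1]
    have hxx2 : -R ≤ (c t).1 - r_o := by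
      have h1 : δ ≤ (c t).1 := hmem.1.1
      have := hro.2; linarith
    have hyy1 : (c t).2 - z_o ≤ H := by
      have h1 : (c t).2 ≤ h := hmem.2.2
      have := hzo.1; linarith
    have hyy2 : -H ≤ (c t).2 - z_o := by
      have h1 : δ ≤ (c t).2 := hmem.2.1
      have := hzo.2; linarith
    have hn_le : ((c t).1 - r_o) ^ 2 + ((c t).2 - z_o) ^ 2 ≤ R ^ 2 + H ^ 2 := by
      have b1 : ((c t).1 - r_o) ^ 2 ≤ R ^ 2 := sq_le_sq' hxx2 hxx1
      have b2 : ((c t).2 - z_o) ^ 2 ≤ H ^ 2 := sq_le_sq' hyy2 hyy1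
      linarith
    have hn_pos : 0 < ((c t).1 - r_o) ^ 2 + ((c t).2 - z_o) ^ 2 := by
      rcases eq_or_ne (c t).1 r_o with hr | hr
      · have hzz := hexcl t ht hr
        have h2 : 0 < ((c t).2 - z_o) ^ 2 :=
          lt_of_le_of_ne (sq_nonneg _) (Ne.symm (pow_ne_zero 2 (by linarith)))
        have := sq_nonneg ((c t).1 - r_o)
        linarith
      · have h2 : 0 < ((c t).1 - r_o) ^ 2 :=
          lt_of_le_of_ne (sq_nonneg _) (Ne.symm (pow_ne_zero 2 (sub_ne_zero.mpr hr)))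
        have := sq_nonneg ((c t).2 - z_o)
        linarith
    have hXle : ((c t).1 - r_o) * (deriv (fun s => s * φ s) (c t).1 * ψ (c t).2 / (c t).1)
        + ((c t).2 - z_o) * (φ (c t).1 * deriv ψ (c t).2) ≤ -ε := by
      have hmax := hpMmax (hcS t ht)
      rw [hεdef, neg_neg]
      exact hmax
    have hnum : ((c t).1 - r_o) * zeta φ ψ (c t).1 (c t).2
        - ((c t).2 - z_o) * eta φ ψ (c t).1 (c t).2
        = ((c t).1 - r_o) * (deriv (fun s => s * φ s) (c t).1 * ψ (c t).2 / (c t).1)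
        + ((c t).2 - z_o) * (φ (c t).1 * deriv ψ (c t).2) := by
      simp only [eta, zeta]
      ring
    have h1 : (((c t).1 - r_o) * zeta φ ψ (c t).1 (c t).2
        - ((c t).2 - z_o) * eta φ ψ (c t).1 (c t).2)
        / (((c t).1 - r_o) ^ 2 + ((c t).2 - z_o) ^ 2)
        ≤ -ε / (((c t).1 - r_o) ^ 2 + ((c t).2 - z_o) ^ 2) := by
      apply div_le_div_of_nonneg_right ?x hn_pos.le
      case x => rw [hnum]; exact hXle
    have h2 : -ε / (((c t).1 - r_o) ^ 2 + ((c t).2 - z_o) ^ 2)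
        ≤ -(ε / (R ^ 2 + H ^ 2)) := by
      rw [neg_div, neg_le_neg_iff]
      exact div_le_div_of_nonneg_left hε.le hn_pos hn_le
    calc (((c t).1 - r_o) * zeta φ ψ (c t).1 (c t).2
        - ((c t).2 - z_o) * eta φ ψ (c t).1 (c t).2)
        / (((c t).1 - r_o) ^ 2 + ((c t).2 - z_o) ^ 2)
        ≤ -ε / (((c t).1 - r_o) ^ 2 + ((c t).2 - z_o) ^ 2) := h1
      _ ≤ -(ε / (R ^ 2 + H ^ 2)) := h2
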